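/- Let 0 < q < 1, s < 2, C₁ = 2(1+q⁻¹)²(1 − q^{(2−s)/2})⁻¹. If the numbers of samples M_l (l = 2, …, L) satisfy M_l ≥ C₁ q^{(s+2)(l−1)/2 + 2(1−L)} and M₁ ≥ 12(Tol₁²/4 + V[u]) Tol⁻², then (1/2)(1 + (1+q⁻¹)² Σ_{l=2}^L M_l⁻¹ q^{2(l−L)}) Tol² + 3 M₁⁻¹ (Tol₁²/4 + V[u]) < Tol², i.e. the MLMC error bound is strictly below Tol². -/

import Mathlib

open Real Finset

/-- For `s < 2` and sample numbers `M_l ≥ C₁ q^{(s+2)(l−1)/2 + 2(1−L)}`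
(`l ≥ 2`) with `C₁ = 2(1+q⁻¹)²(1 − q^{(2−s)/2})⁻¹` and
`M₁ ≥ 12(Tol₁²/4 + V[u]) Tol⁻²`, the MLMC error bound is strictly below `Tol²`. -/
theorem stmt_9 (L : ℕ) (hL : 1 ≤ L) (q s Tol Vu : ℝ)
    (hq : 0 < q) (hq1 : q < 1) (hs : s < 2) (hTol : 0 < Tol) (hVu : 0 ≤ Vu)
    (M : ℕ → ℕ) (hMpos : ∀ l, 0 < M l)
    (hM1 : 12 * ((q ^ ((1 : ℝ) - L) * Tol) ^ 2 / 4 + Vu) / Tol ^ 2 ≤ (M 1 : ℝ))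
    (hMl : ∀ l, 2 ≤ l → l ≤ L →
      2 * (1 + q⁻¹) ^ 2 * (1 - q ^ ((2 - s) / 2))⁻¹
          * q ^ ((s + 2) / 2 * ((l : ℝ) - 1) + 2 * (1 - (L : ℝ))) ≤ (M l : ℝ)) :
    1 / 2 * (1 + (1 + q⁻¹) ^ 2
        * ∑ l ∈ Finset.Icc 2 L, (M l : ℝ)⁻¹ * q ^ (2 * ((l : ℝ) - L))) * Tol ^ 2
      + 3 * (M 1 : ℝ)⁻¹ * ((q ^ ((1 : ℝ) - L) * Tol) ^ 2 / 4 + Vu) < Tol ^ 2 := by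
  have hqinv : 0 < q⁻¹ := inv_pos.mpr hq
  set A : ℝ := (1 + q⁻¹) ^ 2 with hAdef
  have hA0 : 0 < A := by positivity
  set θ : ℝ := q ^ ((2 - s) / 2) with hθdef
  have hθ0 : 0 < θ := Real.rpow_pos_of_pos hq _
  have hθ1 : θ < 1 := Real.rpow_lt_one hq.le hq1 (by linarith)
  have h1θ : 0 < 1 - θ := by linarith
  -- termwise bound
  have hterm : ∀ l ∈ Finset.Icc 2 L,
      (M l : ℝ)⁻¹ * q ^ (2 * ((l : ℝ) - L)) ≤ (1 - θ) / (2 * A) * θ ^ (l - 1) := by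
    intro l hl
    rw [Finset.mem_Icc] at hl
    obtain ⟨hl2, hlL⟩ := hl
    have hC := hMl l hl2 hlL
    set e : ℝ := (s + 2) / 2 * ((l : ℝ) - 1) + 2 * (1 - (L : ℝ)) with hedef
    have hqe : (0:ℝ) < q ^ e := Real.rpow_pos_of_pos hq _
    have hC0 : 0 < 2 * A * (1 - θ)⁻¹ * q ^ e := by positivity
    have hMinv : (M l : ℝ)⁻¹ ≤ (2 * A * (1 - θ)⁻¹ * q ^ e)⁻¹ :=
      inv_anti₀ hC0 hC
    have hmul : (M l : ℝ)⁻¹ * q ^ (2 * ((l : ℝ) - L))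
        ≤ (2 * A * (1 - θ)⁻¹ * q ^ e)⁻¹ * q ^ (2 * ((l : ℝ) - L)) :=
      mul_le_mul_of_nonneg_right hMinv (Real.rpow_pos_of_pos hq _).le
    refine hmul.trans_eq ?_
    have hpow : q ^ (2 * ((l : ℝ) - L)) / q ^ e = q ^ (2 * ((l : ℝ) - L) - e) :=
      (Real.rpow_sub hq _ _).symm
    have hexp : 2 * ((l : ℝ) - L) - e = (2 - s) / 2 * ((l : ℝ) - 1) := by
      rw [hedef]; ring
    have hθl : θ ^ (l - 1) = q ^ ((2 - s) / 2 * ((l : ℝ) - 1)) := by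
      rw [hθdef, ← Real.rpow_natCast (q ^ ((2 - s) / 2)) (l - 1),
        ← Real.rpow_mul hq.le]
      congr 1
      have h1l : 1 ≤ l := le_trans (by norm_num) hl2
      have : ((l - 1 : ℕ) : ℝ) = (l : ℝ) - 1 := by
        push_cast [h1l]; ring
      rw [this]
    rw [hθl, ← hexp, ← hpow]
    field_simp
  -- geometric sum bound
  have hT : ∑ l ∈ Finset.Icc 2 L, θ ^ (l - 1) ≤ θ / (1 - θ) := by
    have h1 : ∑ l ∈ Finset.Icc 2 L, θ ^ (l - 1) = ∑ l ∈ Finset.Ico 1 L, θ ^ l := by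
      rw [← Finset.Ico_add_one_right_eq_Icc, Finset.sum_Ico_eq_sum_range, Finset.sum_Ico_eq_sum_range]
      have h2 : L + 1 - 2 = L - 1 := by omega
      rw [h2]
      exact Finset.sum_congr rfl (fun i _ => by congr 1; omega)
    rw [h1]
    simpa using geom_sum_Ico_le_of_lt_one hθ0.le hθ1 (m := 1) (n := L)
  -- sum bound
  have hsum : ∑ l ∈ Finset.Icc 2 L, (M l : ℝ)⁻¹ * q ^ (2 * ((l : ℝ) - L))
      ≤ (1 - θ) / (2 * A) * (θ / (1 - θ)) := by
    calc ∑ l ∈ Finset.Icc 2 L, (M l : ℝ)⁻¹ * q ^ (2 * ((l : ℝ) - L))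
        ≤ ∑ l ∈ Finset.Icc 2 L, (1 - θ) / (2 * A) * θ ^ (l - 1) :=
          Finset.sum_le_sum hterm
      _ = (1 - θ) / (2 * A) * ∑ l ∈ Finset.Icc 2 L, θ ^ (l - 1) := by
          rw [Finset.mul_sum]
      _ ≤ (1 - θ) / (2 * A) * (θ / (1 - θ)) :=
          mul_le_mul_of_nonneg_left hT (by positivity)
  have hAS : A * ∑ l ∈ Finset.Icc 2 L, (M l : ℝ)⁻¹ * q ^ (2 * ((l : ℝ) - L)) ≤ θ / 2 := by
    have := mul_le_mul_of_nonneg_left hsum hA0.le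
    have heq : A * ((1 - θ) / (2 * A) * (θ / (1 - θ))) = θ / 2 := by
      field_simp
    linarith [heq ▸ this]
  -- second term bound
  set X : ℝ := (q ^ ((1 : ℝ) - L) * Tol) ^ 2 / 4 + Vu with hXdef
  have hX0 : 0 < X := by
    have : 0 < q ^ ((1 : ℝ) - L) := Real.rpow_pos_of_pos hq _
    have : 0 < (q ^ ((1 : ℝ) - L) * Tol) ^ 2 := by positivity
    rw [hXdef]; linarith
  have hM1pos : (0:ℝ) < (M 1 : ℝ) := by exact_mod_cast hMpos 1
  have hsecond : 3 * (M 1 : ℝ)⁻¹ * X ≤ Tol ^ 2 / 4 := by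
    have hq0 : (0:ℝ) < 12 * X / Tol ^ 2 := by positivity
    have hinv : (M 1 : ℝ)⁻¹ ≤ (12 * X / Tol ^ 2)⁻¹ := inv_anti₀ hq0 hM1
    have : 3 * (M 1 : ℝ)⁻¹ * X ≤ 3 * (12 * X / Tol ^ 2)⁻¹ * X := by
      have := mul_le_mul_of_nonneg_right hinv hX0.le
      nlinarith
    refine this.trans_eq ?_
    field_simp
    ring
  -- conclude
  have hTol2 : 0 < Tol ^ 2 := by positivity
  have hmul := mul_le_mul_of_nonneg_right hAS hTol2.le
  nlinarith [hmul, hsecond, mul_lt_mul_of_pos_right hθ1 hTol2]
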